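/- No vertex v of G of degree k lies on ⌊k/2⌋ distinct poor triangles, i.e., ⌊k/2⌋ distinct triangles each of whose two vertices other than v are 3-vertices whose pendant neighbors have degree at most 5. -/

import Mathlib

open SimpleGraph Finset

/-- A graph is `(c 0, c 1, c 2)`-colorable if its vertices can be colored with
colors `0, 1, 2` so that every vertex colored `i` has at most `c i` neighbors of its
own color.  With `c = ![1,1,0]` this is a `(1,1,0)`-coloring. -/
def Colorable3 {α : Type*} (G : SimpleGraph α) (c : Fin 3 → ℕ) : Prop :=
  ∃ f : α → Fin 3, ∀ v, {u | G.Adj v u ∧ f u = f v}.ncard ≤ c (f v)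

/-- `G` contains no cycle of length 4 and no cycle of length 5. -/
def NoC45 {V : Type*} (G : SimpleGraph V) : Prop :=
  ∀ (v : V) (w : G.Walk v v), w.IsCycle → w.length ≠ 4 ∧ w.length ≠ 5

/-- `G` is a minimal counterexample: `G` is not `(c 0, c 1, c 2)`-colorable, but every
proper subgraph of `G` is. -/
def MinCE {V : Type*} (G : SimpleGraph V) (c : Fin 3 → ℕ) : Prop :=
  ¬ Colorable3 G c ∧ ∀ H : G.Subgraph, H ≠ ⊤ → Colorable3 H.coe c

/-- `u`, `v`, `w` form a triangle of `G`. -/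
def TriOn {V : Type*} (G : SimpleGraph V) (u v w : V) : Prop :=
  G.Adj u v ∧ G.Adj v w ∧ G.Adj u w

/-- `T` is a poor triangle at `v`: a triangle containing `v` whose two other vertices
are 3-vertices whose pendant neighbors (unique neighbors outside the triangle) have
degree at most 5. -/
def PoorAt {V : Type*} [Fintype V] (G : SimpleGraph V) [DecidableRel G.Adj]
    (v : V) (T : Set V) : Prop :=
  ∃ a b : V, TriOn G v a b ∧ T = {v, a, b} ∧
    G.degree a = 3 ∧ G.degree b = 3 ∧
    (∀ x : V, G.Adj a x → x ≠ v → x ≠ b → G.degree x ≤ 5) ∧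
    (∀ x : V, G.Adj b x → x ≠ v → x ≠ a → G.degree x ≤ 5)

section CycleLemmas
variable {V : Type*} {G : SimpleGraph V}

lemma noC4' (hG : NoC45 G)
    {a b c d : V} (hab : G.Adj a b) (hbc : G.Adj b c) (hcd : G.Adj c d) (hda : G.Adj d a)
    (hac : a ≠ c) (hbd : b ≠ d) : False := by
  refine (hG a (.cons hab (.cons hbc (.cons hcd (.cons hda .nil)))) ?_).1 rfl
  constructor
  · constructor
    · constructor
      simp [Walk.edges, hab.ne, hbc.ne, hcd.ne, hda.ne, hac, hbd, Sym2.eq, Sym2.rel_iff',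
        hab.ne', hbc.ne', hcd.ne', hda.ne', hac.symm, hbd.symm]
    · simp
  · simp [Walk.support, hab.ne', hbc.ne, hbc.ne', hcd.ne, hcd.ne', hda.ne', hbd, hac.symm,
      hbd.symm, hda.ne, hac]

lemma noC5' (hG : NoC45 G)
    {a b c d e : V} (hab : G.Adj a b) (hbc : G.Adj b c) (hcd : G.Adj c d) (hde : G.Adj d e)
    (hea : G.Adj e a)
    (hac : a ≠ c) (had : a ≠ d) (hbd : b ≠ d) (hbe : b ≠ e) (hce : c ≠ e) : False := by
  refine (hG a (.cons hab (.cons hbc (.cons hcd (.cons hde (.cons hea .nil))))) ?_).2 rfl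
  constructor
  · constructor
    · constructor
      simp [Walk.edges, hab.ne, hbc.ne, hcd.ne, hde.ne, hea.ne, hac, hbd, hce, had, hbe,
        Sym2.eq, Sym2.rel_iff', hab.ne', hbc.ne', hcd.ne', hde.ne', hea.ne', hac.symm,
        hbd.symm, hce.symm, had.symm, hbe.symm]
    · simp
  · simp [Walk.support, hab.ne', hbc.ne, hbc.ne', hcd.ne, hcd.ne', hde.ne, hde.ne', hea.ne',
      hea.ne, hbd, hac.symm, hbd.symm, hce, hce.symm, had, had.symm, hbe, hbe.symm, hac]

end CycleLemmas

set_option maxHeartbeats 2000000 in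
/-- No vertex `v` of `G` of degree `k` lies on `⌊k/2⌋` distinct poor triangles. -/
theorem stmt16 {V : Type*} [Fintype V] (G : SimpleGraph V) [DecidableRel G.Adj]
    (hG : NoC45 G) (hmin : MinCE G ![3, 0, 0]) :
    ¬ ∃ (v : V) (S : Finset (Set V)),
      (∀ T ∈ S, PoorAt G v T) ∧ S.card = G.degree v / 2 := by
  classical
  rintro ⟨v, S, hS, hcard⟩
  -- basic structural consequences of C4/C5-freeness
  have common : ∀ u1 u2 r : V, G.Adj v u1 → G.Adj v u2 → u1 ≠ u2 → r ≠ v →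
      G.Adj r u1 → G.Adj r u2 → False := by
    intro u1 u2 r h1 h2 h12 hrv hr1 hr2
    exact noC4' hG h1 hr1.symm hr2 h2.symm hrv.symm h12
  have dist2 : ∀ u1 u2 r1 r2 : V, G.Adj v u1 → G.Adj v u2 → u1 ≠ u2 →
      ¬ G.Adj v r1 → ¬ G.Adj v r2 → r1 ≠ v → r2 ≠ v → r1 ≠ r2 →
      G.Adj r1 u1 → G.Adj r2 u2 → ¬ G.Adj r1 r2 := by
    intro u1 u2 r1 r2 h1 h2 h12 hn1 hn2 hv1 hv2 hrr ha1 ha2 hadj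
    have hru2 : r1 ≠ u2 := fun h => hn1 (h ▸ h2)
    have hru1 : u1 ≠ r2 := fun h => hn2 (h ▸ h1)
    exact noC5' hG ha1 h1.symm h2 ha2.symm hadj.symm hv1 hru2 h12 hru1 (Ne.symm hv2)
  -- choose the data of each poor triangle
  have hS2 : ∀ T : Set V, ∃ a b p q : V, T ∈ S →
      (G.Adj v a ∧ G.Adj a b ∧ G.Adj v b ∧ T = {v, a, b} ∧ G.degree a = 3 ∧ G.degree b = 3 ∧
        (∀ x, G.Adj a x → x ≠ v → x ≠ b → G.degree x ≤ 5) ∧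
        (∀ x, G.Adj b x → x ≠ v → x ≠ a → G.degree x ≤ 5) ∧
        G.Adj a p ∧ p ≠ v ∧ p ≠ b ∧ G.Adj b q ∧ q ≠ v ∧ q ≠ a) := by
    intro T
    by_cases hT : T ∈ S
    · obtain ⟨a, b, ⟨h1, h2, h3⟩, hTeq, hda, hdb, hpa, hpb⟩ := hS T hT
      have hpend : ∀ x y : V, G.Adj v x → G.Adj x y → G.Adj v y → G.degree x = 3 →
          ∃ p, G.Adj x p ∧ p ≠ v ∧ p ≠ y := by
        intro x y hx1 hx2 hx3 hdx
        have hsub : ({v, y} : Finset V) ⊆ G.neighborFinset x := by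
          intro z hz
          simp only [mem_insert, mem_singleton] at hz
          rcases hz with rfl | rfl
          · exact (mem_neighborFinset _ _ _).2 hx1.symm
          · exact (mem_neighborFinset _ _ _).2 hx2
        have hclt : ({v, y} : Finset V).card < (G.neighborFinset x).card := by
          rw [G.card_neighborFinset_eq_degree, hdx]
          have : ({v, y} : Finset V).card ≤ 2 := (card_insert_le _ _).trans (by simp)
          omega
        obtain ⟨p, hp, hpn⟩ := exists_of_ssubset
          (lt_of_le_of_ne hsub (fun h => by simp [h] at hclt))
        simp only [mem_insert, mem_singleton, not_or] at hpn
        exact ⟨p, (mem_neighborFinset _ _ _).1 hp, hpn.1, hpn.2⟩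
      obtain ⟨p, hp1, hp2, hp3⟩ := hpend a b h1 h2 h3 hda
      obtain ⟨q, hq1, hq2, hq3⟩ := hpend b a h3 h2.symm h1 hdb
      exact ⟨a, b, p, q, fun _ =>
        ⟨h1, h2, h3, hTeq, hda, hdb, hpa, hpb, hp1, hp2, hp3, hq1, hq2, hq3⟩⟩
    · exact ⟨v, v, v, v, fun h => absurd h hT⟩
  choose A B Pf Qf hdata using hS2
  -- named facts
  have hav : ∀ T ∈ S, G.Adj v (A T) := fun T hT => (hdata T hT).1
  have hab : ∀ T ∈ S, G.Adj (A T) (B T) := fun T hT => (hdata T hT).2.1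
  have hbv : ∀ T ∈ S, G.Adj v (B T) := fun T hT => (hdata T hT).2.2.1
  have hTeq : ∀ T ∈ S, T = {v, A T, B T} := fun T hT => (hdata T hT).2.2.2.1
  have hdegA : ∀ T ∈ S, G.degree (A T) = 3 := fun T hT => (hdata T hT).2.2.2.2.1
  have hdegB : ∀ T ∈ S, G.degree (B T) = 3 := fun T hT => (hdata T hT).2.2.2.2.2.1
  have hQ5 : ∀ T ∈ S, ∀ x, G.Adj (B T) x → x ≠ v → x ≠ A T → G.degree x ≤ 5 :=
    fun T hT => (hdata T hT).2.2.2.2.2.2.2.1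
  have hap : ∀ T ∈ S, G.Adj (A T) (Pf T) := fun T hT => (hdata T hT).2.2.2.2.2.2.2.2.1
  have hpv : ∀ T ∈ S, Pf T ≠ v := fun T hT => (hdata T hT).2.2.2.2.2.2.2.2.2.1
  have hpb : ∀ T ∈ S, Pf T ≠ B T := fun T hT => (hdata T hT).2.2.2.2.2.2.2.2.2.2.1
  have hbq : ∀ T ∈ S, G.Adj (B T) (Qf T) := fun T hT => (hdata T hT).2.2.2.2.2.2.2.2.2.2.2.1
  have hqv : ∀ T ∈ S, Qf T ≠ v := fun T hT => (hdata T hT).2.2.2.2.2.2.2.2.2.2.2.2.1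
  have hqa : ∀ T ∈ S, Qf T ≠ A T := fun T hT => (hdata T hT).2.2.2.2.2.2.2.2.2.2.2.2.2
  clear hdata hS
  have hAv : ∀ T ∈ S, A T ≠ v := fun T hT => (hav T hT).ne'
  have hBv : ∀ T ∈ S, B T ≠ v := fun T hT => (hbv T hT).ne'
  have hAB : ∀ T ∈ S, A T ≠ B T := fun T hT => (hab T hT).ne
  -- pendants are not adjacent to v
  have hPnv : ∀ T ∈ S, ¬ G.Adj v (Pf T) := by
    intro T hT hadj
    exact noC4' hG (hab T hT).symm (hap T hT) hadj.symm (hbv T hT)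
      (hpb T hT).symm (hAv T hT)
  have hQnv : ∀ T ∈ S, ¬ G.Adj v (Qf T) := by
    intro T hT hadj
    exact noC4' hG (hab T hT) (hbq T hT) hadj.symm (hav T hT)
      (hqa T hT).symm (hBv T hT)
  have hPQ : ∀ T ∈ S, Pf T ≠ Qf T := by
    intro T hT h
    exact common (A T) (B T) (Pf T) (hav T hT) (hbv T hT) (hAB T hT) (hpv T hT)
      (hap T hT).symm (h ▸ (hbq T hT).symm)
  have uniq : ∀ T ∈ S, ∀ T' ∈ S, ∀ x : V, (x = A T ∨ x = B T) →
      (x = A T' ∨ x = B T') → T = T' := by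
    intro T hT T' hT' x hx hx'
    by_contra hne
    have eqT : ∀ {y z y' z' : V}, T = {v, y, z} → T' = {v, y', z'} →
        ((y = y' ∧ z = z') ∨ (y = z' ∧ z = y')) → T = T' := by
      rintro y z y' z' e1 e2 (⟨rfl, rfl⟩ | ⟨rfl, rfl⟩)
      · rw [e1, e2]
      · rw [e1, e2, Set.pair_comm]
    rcases hx with rfl | rfl
    · rcases hx' with h' | h'
      · have hBB : B T ≠ B T' := fun h => hne (eqT (hTeq T hT) (hTeq T' hT') (Or.inl ⟨h', h⟩))
        exact common (B T) (B T') (A T) (hbv T hT) (hbv T' hT') hBB (hAv T hT) (hab T hT)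
          (by rw [h']; exact hab T' hT')
      · have hne2 : B T ≠ A T' := fun h => hne (eqT (hTeq T hT) (hTeq T' hT') (Or.inr ⟨h', h⟩))
        exact common (B T) (A T') (A T) (hbv T hT) (hav T' hT') hne2 (hAv T hT) (hab T hT)
          (by rw [h']; exact (hab T' hT').symm)
    · rcases hx' with h' | h'
      · have hne2 : A T ≠ B T' := fun h => hne (eqT (hTeq T hT) (hTeq T' hT') (Or.inr ⟨h, h'⟩))
        exact common (A T) (B T') (B T) (hav T hT) (hbv T' hT') hne2 (hBv T hT) (hab T hT).symm
          (by rw [h']; exact hab T' hT')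
      · have hne2 : A T ≠ A T' := fun h => hne (eqT (hTeq T hT) (hTeq T' hT') (Or.inl ⟨h, h'⟩))
        exact common (A T) (A T') (B T) (hav T hT) (hav T' hT') hne2 (hBv T hT) (hab T hT).symm
          (by rw [h']; exact (hab T' hT').symm)
  -- extract a coloring of G - v
  obtain ⟨f, Hf⟩ : ∃ f : V → Fin 3, ∀ u, u ≠ v →
      ((G.neighborFinset u).filter (fun y => y ≠ v ∧ f y = f u)).card ≤
        (![3,0,0] : Fin 3 → ℕ) (f u) := by
    set H : G.Subgraph := (⊤ : G.Subgraph).deleteVerts {v} with hH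
    have hne : H ≠ ⊤ := by
      intro h
      have hv : v ∈ H.verts := by rw [h]; trivial
      simp [hH] at hv
    obtain ⟨f0, hf0⟩ := hmin.2 H hne
    have hmem : ∀ u : V, u ≠ v → u ∈ H.verts := by
      intro u hu
      simp [hH, hu]
    refine ⟨fun x => if h : x ∈ H.verts then f0 ⟨x, h⟩ else 0, ?_⟩
    intro u hu
    set f : V → Fin 3 := fun x => if h : x ∈ H.verts then f0 ⟨x, h⟩ else 0 with hf
    have hfu : f u = f0 ⟨u, hmem u hu⟩ := by simp [hf, hmem u hu]
    have key := hf0 ⟨u, hmem u hu⟩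
    have hseteq : {x : ↥H.verts | H.coe.Adj ⟨u, hmem u hu⟩ x ∧ f0 x = f0 ⟨u, hmem u hu⟩} =
        Subtype.val ⁻¹' {x : V | G.Adj u x ∧ x ≠ v ∧ f x = f u} := by
      ext ⟨x, hx⟩
      have hxv : x ≠ v := by
        intro h; subst h; simp [hH] at hx
      simp only [Set.mem_setOf_eq, Set.mem_preimage, hf]
      constructor
      · rintro ⟨hadj, hcol⟩
        refine ⟨?_, hxv, ?_⟩
        · have := hadj
          simp only [hH, Subgraph.coe_adj, Subgraph.deleteVerts_adj, Subgraph.top_adj] at this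
          exact this.2.2.2.2
        · rw [dif_pos hx, dif_pos (hmem u hu)]; exact hcol
      · rintro ⟨hadj, _, hcol⟩
        refine ⟨?_, ?_⟩
        · simp only [hH, Subgraph.coe_adj, Subgraph.deleteVerts_adj, Subgraph.top_adj]
          refine ⟨trivial, by simp [hu], trivial, by simp [hxv], hadj⟩
        · rw [dif_pos hx, dif_pos (hmem u hu)] at hcol; exact hcol
    rw [hseteq] at key
    have himg : {x : V | G.Adj u x ∧ x ≠ v ∧ f x = f u} =
        Subtype.val '' ((Subtype.val : ↥H.verts → V) ⁻¹'
          {x : V | G.Adj u x ∧ x ≠ v ∧ f x = f u}) := by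
      rw [Subtype.image_preimage_coe]
      ext x
      simp only [Set.mem_setOf_eq, Set.mem_inter_iff]
      exact ⟨fun h => ⟨hmem x h.2.1, h⟩, fun h => h.2⟩
    have hncard : {x : V | G.Adj u x ∧ x ≠ v ∧ f x = f u}.ncard =
        ((Subtype.val : ↥H.verts → V) ⁻¹' {x : V | G.Adj u x ∧ x ≠ v ∧ f x = f u}).ncard := by
      conv_lhs => rw [himg]
      rw [Set.ncard_image_of_injective _ Subtype.val_injective]
    have hfin : {x : V | G.Adj u x ∧ x ≠ v ∧ f x = f u} =
        ↑((G.neighborFinset u).filter (fun y => y ≠ v ∧ f y = f u)) := by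
      ext x
      simp [mem_neighborFinset, and_assoc]
    rw [← hfu] at key
    rw [← Set.ncard_coe_finset, ← hfin, hncard]
    exact key
  -- the set of triangle vertices
  set TA : Finset V := S.biUnion (fun T => {A T, B T}) with hTA
  have memTA : ∀ x : V, x ∈ TA ↔ ∃ T ∈ S, x = A T ∨ x = B T := by
    intro x
    simp [hTA, mem_biUnion, eq_comm]
  have hTAsub : TA ⊆ G.neighborFinset v := by
    intro x hx
    obtain ⟨T, hT, h⟩ := (memTA x).1 hx
    rcases h with rfl | rfl
    · exact (mem_neighborFinset _ _ _).2 (hav T hT)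
    · exact (mem_neighborFinset _ _ _).2 (hbv T hT)
  have hTAcard : TA.card = 2 * S.card := by
    rw [hTA, card_biUnion]
    · rw [Finset.sum_congr rfl (fun T hT => by
        rw [card_insert_of_notMem (by simp [hAB T hT]), card_singleton])]
      simp [mul_comm]
    · intro T hT T' hT' hne
      rw [Function.onFun, Finset.disjoint_left]
      intro x hx hx'
      simp only [mem_insert, mem_singleton] at hx hx'
      exact hne (uniq T hT T' hT' x hx hx')
  set E : Finset V := G.neighborFinset v \ TA with hE
  have hEcard : E.card ≤ 1 := by
    have h1 : E.card = (G.neighborFinset v).card - TA.card := card_sdiff_of_subset hTAsub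
    have h2 : (G.neighborFinset v).card = G.degree v := G.card_neighborFinset_eq_degree v
    have h3 : TA.card ≤ (G.neighborFinset v).card := card_le_card hTAsub
    omega
  -- choose the color of v
  set cv : Fin 3 := if ∃ w ∈ E, f w = 1 then 2 else 1 with hcv
  set cb : Fin 3 := if ∃ w ∈ E, f w = 1 then 1 else 2 with hcb
  have hcv0 : cv ≠ 0 := by rw [hcv]; split <;> decide
  have hcb0 : cb ≠ 0 := by rw [hcb]; split <;> decide
  have hcvcb : cv ≠ cb := by rw [hcv, hcb]; split <;> decide
  have hfE : ∀ w ∈ E, f w ≠ cv := by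
    intro w hw
    rw [hcv]
    split
    · rename_i hp
      obtain ⟨w1, hw1, hf1⟩ := hp
      intro h2
      rw [Finset.card_le_one.mp hEcard w1 hw1 w hw] at hf1
      rw [hf1] at h2
      exact absurd h2 (by decide)
    · rename_i hp
      exact fun h1 => hp ⟨w, hw, h1⟩
  -- neighborhoods of triangle vertices
  have NAB : ∀ T ∈ S, G.neighborFinset (A T) = {v, B T, Pf T} ∧
      G.neighborFinset (B T) = {v, A T, Qf T} := by
    intro T hT
    have mk : ∀ x y p : V, G.Adj v x → G.Adj x y → G.Adj x p → G.degree x = 3 →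
        y ≠ v → p ≠ v → p ≠ y → G.neighborFinset x = {v, y, p} := by
      intro x y p h1 h2 h3 hd hyv hpv hpy
      have hsub : ({v, y, p} : Finset V) ⊆ G.neighborFinset x := by
        intro z hz
        simp only [mem_insert, mem_singleton] at hz
        rcases hz with rfl | rfl | rfl
        · exact (mem_neighborFinset _ _ _).2 h1.symm
        · exact (mem_neighborFinset _ _ _).2 h2
        · exact (mem_neighborFinset _ _ _).2 h3
      have hc3 : ({v, y, p} : Finset V).card = 3 := by
        rw [card_insert_of_notMem (by simp [Ne.symm hyv, Ne.symm hpv]),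
          card_insert_of_notMem (by simp [hpy.symm]), card_singleton]
      refine (eq_of_subset_of_card_le hsub ?_).symm
      rw [G.card_neighborFinset_eq_degree, hd, hc3]
    constructor
    · exact mk (A T) (B T) (Pf T) (hav T hT) (hab T hT) (hap T hT) (hdegA T hT)
        (hBv T hT) (hpv T hT) (hpb T hT)
    · exact mk (B T) (A T) (Qf T) (hbv T hT) (hab T hT).symm (hbq T hT) (hdegB T hT)
        (hAv T hT) (hqv T hT) (hqa T hT)
  have memNA : ∀ T ∈ S, ∀ y, G.Adj (A T) y ↔ (y = v ∨ y = B T ∨ y = Pf T) := by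
    intro T hT y
    rw [← mem_neighborFinset, (NAB T hT).1]
    simp
  have memNB : ∀ T ∈ S, ∀ y, G.Adj (B T) y ↔ (y = v ∨ y = A T ∨ y = Qf T) := by
    intro T hT y
    rw [← mem_neighborFinset, (NAB T hT).2]
    simp
  have hQ5' : ∀ T ∈ S, G.degree (Qf T) ≤ 5 :=
    fun T hT => hQ5 T hT (Qf T) (hbq T hT) (hqv T hT) (hqa T hT)
  -- recoloring data
  set zc : V → ℕ := fun r => ((G.neighborFinset r).filter (fun y => f y = 0)).card with hzc
  set colA : Set V → Fin 3 := fun T => if f (Pf T) ≠ cb then cb else 0 with hcolA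
  set colB : Set V → Fin 3 := fun T =>
    if f (Pf T) ≠ cb then 0 else if f (Qf T) ≠ cb then cb else 0 with hcolB
  set RecQ : Set V → Prop := fun T =>
    f (Pf T) ≠ cb ∧ f (Qf T) = 0 ∧ f (B T) ≠ 0 ∧ 3 ≤ zc (Qf T) with hRecQ
  set ncol : V → V → Fin 3 := fun r x =>
    if ∃ y ∈ G.neighborFinset r, y ≠ x ∧ f y = 1 then 2 else 1 with hncolDef
  set g : V → Fin 3 := fun x =>
    if x = v then cv
    else if hA : ∃ T ∈ S, A T = x then colA hA.choose
    else if hB : ∃ T ∈ S, B T = x then colB hB.choose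
    else if hR : ∃ T ∈ S, RecQ T ∧ Qf T = x then ncol x (B hR.choose)
    else f x with hg
  -- evaluation lemmas for g
  have gv : g v = cv := by rw [hg]; simp
  have gA : ∀ T ∈ S, g (A T) = colA T := by
    intro T hT
    have hx : ∃ T' ∈ S, A T' = A T := ⟨T, hT, rfl⟩
    rw [hg]
    simp only []
    rw [if_neg (hAv T hT), dif_pos hx]
    have : hx.choose = T := uniq hx.choose hx.choose_spec.1 T hT (A T)
      (Or.inl hx.choose_spec.2.symm) (Or.inl rfl)
    rw [this]
  have gB : ∀ T ∈ S, g (B T) = colB T := by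
    intro T hT
    have hx : ∃ T' ∈ S, B T' = B T := ⟨T, hT, rfl⟩
    have hnA : ¬ ∃ T' ∈ S, A T' = B T := by
      rintro ⟨T', hT', h⟩
      have := uniq T' hT' T hT (B T) (Or.inl h.symm) (Or.inr rfl)
      subst this
      exact hAB T' hT' h
    rw [hg]
    simp only []
    rw [if_neg (hBv T hT), dif_neg hnA, dif_pos hx]
    have : hx.choose = T := uniq hx.choose hx.choose_spec.1 T hT (B T)
      (Or.inr hx.choose_spec.2.symm) (Or.inr rfl)
    rw [this]
  -- pendants are not triangle vertices
  have hPnTA : ∀ T ∈ S, ∀ T' ∈ S, Pf T ≠ A T' ∧ Pf T ≠ B T' := by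
    intro T hT T' hT'
    constructor
    · intro h; exact hPnv T hT (h ▸ hav T' hT')
    · intro h; exact hPnv T hT (h ▸ hbv T' hT')
  have hQnTA : ∀ T ∈ S, ∀ T' ∈ S, Qf T ≠ A T' ∧ Qf T ≠ B T' := by
    intro T hT T' hT'
    constructor
    · intro h; exact hQnv T hT (h ▸ hav T' hT')
    · intro h; exact hQnv T hT (h ▸ hbv T' hT')
  -- uniqueness of recolored pendants
  have uniqQ : ∀ T ∈ S, ∀ T' ∈ S, Qf T = Qf T' → T = T' := by
    intro T hT T' hT' h
    by_contra hne
    have hBB : B T ≠ B T' := fun hb => hne (uniq T hT T' hT' (B T) (Or.inr rfl) (Or.inr hb))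
    exact common (B T) (B T') (Qf T) (hbv T hT) (hbv T' hT') hBB (hqv T hT)
      (hbq T hT).symm (h ▸ (hbq T' hT').symm)
  have hPQ' : ∀ T ∈ S, ∀ T' ∈ S, Pf T = Qf T' → False := by
    intro T hT T' hT' h
    by_cases hne : T = T'
    · subst hne; exact hPQ T hT h
    · have hABne : A T ≠ B T' := fun hb => hne (uniq T hT T' hT' (A T) (Or.inl rfl) (Or.inr hb))
      exact common (A T) (B T') (Pf T) (hav T hT) (hbv T' hT') hABne (hpv T hT)
        (hap T hT).symm (h ▸ (hbq T' hT').symm)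
  have gQ : ∀ T ∈ S, RecQ T → g (Qf T) = ncol (Qf T) (B T) := by
    intro T hT hrec
    have hnA : ¬ ∃ T' ∈ S, A T' = Qf T := by
      rintro ⟨T', hT', h⟩
      exact (hQnTA T hT T' hT').1 h.symm
    have hnB : ¬ ∃ T' ∈ S, B T' = Qf T := by
      rintro ⟨T', hT', h⟩
      exact (hQnTA T hT T' hT').2 h.symm
    have hx : ∃ T' ∈ S, RecQ T' ∧ Qf T' = Qf T := ⟨T, hT, hrec, rfl⟩
    rw [hg]
    simp only []
    rw [if_neg (hqv T hT), dif_neg hnA, dif_neg hnB, dif_pos hx]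
    have : hx.choose = T := uniqQ hx.choose hx.choose_spec.1 T hT hx.choose_spec.2.2
    rw [this]
  have gU : ∀ y : V, y ≠ v → (¬ ∃ T ∈ S, A T = y) → (¬ ∃ T ∈ S, B T = y) →
      (¬ ∃ T ∈ S, RecQ T ∧ Qf T = y) → g y = f y := by
    intro y h1 h2 h3 h4
    rw [hg]
    simp only []
    rw [if_neg h1, dif_neg h2, dif_neg h3, dif_neg h4]
  -- the recoloring of a pendant is compatible with its neighbors
  have hncol : ∀ T ∈ S, RecQ T → ∀ z, G.Adj (Qf T) z → z ≠ B T →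
      f z ≠ ncol (Qf T) (B T) := by
    intro T hT hrec z hz hzB
    rw [hncolDef]
    dsimp only
    split
    · rename_i hE1
      intro hfz
      obtain ⟨y1, hy1N, hy1B, hy1⟩ := hE1
      set Z := (G.neighborFinset (Qf T)).filter (fun y => f y = 0) with hZ
      have hZ3 : 3 ≤ Z.card := by
        have := hrec.2.2.2
        rw [hzc] at this
        exact this
      have hBmem : B T ∈ G.neighborFinset (Qf T) := (mem_neighborFinset _ _ _).2 (hbq T hT).symm
      have hBZ : B T ∉ Z := by
        rw [hZ, mem_filter]
        exact fun h => hrec.2.2.1 h.2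
      have hy1Z : y1 ∉ Z := by
        rw [hZ, mem_filter]
        intro h
        rw [hy1] at h
        exact absurd h.2 (by decide)
      have hzmem : z ∈ G.neighborFinset (Qf T) := (mem_neighborFinset _ _ _).2 hz
      have hzZ : z ∉ Z := by
        rw [hZ, mem_filter]
        intro h
        rw [hfz] at h
        exact absurd h.2 (by decide)
      have hy1z : y1 ≠ z := by
        intro h
        rw [h, hfz] at hy1
        exact absurd hy1 (by decide)
      have hsub : insert (B T) (insert y1 (insert z Z)) ⊆ G.neighborFinset (Qf T) := by
        intro x hx
        simp only [mem_insert] at hx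
        rcases hx with rfl | rfl | rfl | hx
        · exact hBmem
        · exact hy1N
        · exact hzmem
        · exact (filter_subset _ _) hx
      have hB' : B T ∉ insert y1 (insert z Z) := by
        intro h
        rcases mem_insert.1 h with h | h
        · exact hy1B h.symm
        rcases mem_insert.1 h with h | h
        · exact hzB h.symm
        · exact hBZ h
      have hy1' : y1 ∉ insert z Z := by
        intro h
        rcases mem_insert.1 h with h | h
        · exact hy1z h
        · exact hy1Z h
      have hc : (insert (B T) (insert y1 (insert z Z))).card = Z.card + 3 := by
        rw [card_insert_of_notMem hB', card_insert_of_notMem hy1', card_insert_of_notMem hzZ]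
      have hle := card_le_card hsub
      rw [hc, G.card_neighborFinset_eq_degree] at hle
      have := hQ5' T hT
      omega
    · rename_i hE1
      intro hfz
      exact hE1 ⟨z, (mem_neighborFinset _ _ _).2 hz, hzB, hfz⟩
  -- helper facts about the cap vector and auxiliary bounds
  have cval0 : (![3,0,0] : Fin 3 → ℕ) 0 = 3 := rfl
  have cvalne : ∀ c : Fin 3, c ≠ 0 → (![3,0,0] : Fin 3 → ℕ) c = 0 := by decide
  have hempty : ∀ (u' : V) (c : Fin 3), (∀ y, G.Adj u' y → g y ≠ c) →
      ((G.neighborFinset u').filter (fun x => g x = c)).card = 0 := by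
    intro u' c h
    rw [card_eq_zero, Finset.filter_eq_empty_iff]
    intro y hy
    exact h y ((mem_neighborFinset _ _ _).1 hy)
  have ncolne0 : ∀ r x : V, ncol r x ≠ 0 := by
    intro r x
    rw [hncolDef]
    dsimp only
    split <;> decide
  -- the new coloring is proper
  refine hmin.1 ⟨g, ?_⟩
  intro u
  have hset : {x | G.Adj u x ∧ g x = g u} =
      ↑((G.neighborFinset u).filter (fun x => g x = g u)) := by
    ext x
    simp [mem_neighborFinset]
  rw [hset, Set.ncard_coe_finset]
  by_cases huv : u = v
  · -- the vertex v itself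
    subst huv
    rw [gv, cvalne cv hcv0, Nat.le_zero]
    apply hempty
    intro y hy hgy
    by_cases hyTA : y ∈ TA
    · obtain ⟨T, hT, h⟩ := (memTA y).1 hyTA
      rcases h with rfl | rfl
      · rw [gA T hT] at hgy
        rw [hcolA] at hgy
        dsimp only at hgy
        split at hgy
        · exact hcvcb hgy.symm
        · exact hcv0 hgy.symm
      · rw [gB T hT] at hgy
        rw [hcolB] at hgy
        dsimp only at hgy
        split at hgy
        · exact hcv0 hgy.symm
        · split at hgy
          · exact hcvcb hgy.symm
          · exact hcv0 hgy.symm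
    · have hyE : y ∈ E := by
        rw [hE]
        exact mem_sdiff.2 ⟨(mem_neighborFinset _ _ _).2 hy, hyTA⟩
      have hgyf : g y = f y := by
        refine gU y hy.ne' ?_ ?_ ?_
        · rintro ⟨T, hT, h⟩
          exact hyTA ((memTA y).2 ⟨T, hT, Or.inl h.symm⟩)
        · rintro ⟨T, hT, h⟩
          exact hyTA ((memTA y).2 ⟨T, hT, Or.inr h.symm⟩)
        · rintro ⟨T, hT, _, hq⟩
          exact hQnv T hT (hq ▸ hy)
      rw [hgyf] at hgy
      exact hfE y hyE hgy
  by_cases hAu : ∃ T ∈ S, A T = u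
  · -- a triangle vertex of type A
    obtain ⟨T, hT, rfl⟩ := hAu
    rw [gA T hT]
    by_cases hbr : f (Pf T) ≠ cb
    · have hval : colA T = cb := by rw [hcolA]; dsimp only; rw [if_pos hbr]
      rw [hval, cvalne cb hcb0, Nat.le_zero]
      apply hempty
      intro y hy hgy
      rcases (memNA T hT y).1 hy with rfl | rfl | rfl
      · rw [gv] at hgy
        exact hcvcb hgy
      · rw [gB T hT] at hgy
        have hv0 : colB T = 0 := by rw [hcolB]; dsimp only; rw [if_pos hbr]
        rw [hv0] at hgy
        exact hcb0 hgy.symm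
      · have hPf : g (Pf T) = f (Pf T) := by
          refine gU _ (hpv T hT) ?_ ?_ ?_
          · rintro ⟨T', hT', h⟩
            exact (hPnTA T hT T' hT').1 h.symm
          · rintro ⟨T', hT', h⟩
            exact (hPnTA T hT T' hT').2 h.symm
          · rintro ⟨T', hT', _, hq⟩
            exact hPQ' T hT T' hT' hq.symm
        rw [hPf] at hgy
        exact hbr hgy
    · have hval : colA T = 0 := by rw [hcolA]; dsimp only; rw [if_neg hbr]
      rw [hval, cval0]
      refine (card_filter_le _ _).trans ?_
      rw [G.card_neighborFinset_eq_degree, hdegA T hT]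
  by_cases hBu : ∃ T ∈ S, B T = u
  · -- a triangle vertex of type B
    obtain ⟨T, hT, rfl⟩ := hBu
    rw [gB T hT]
    by_cases hbr : f (Pf T) ≠ cb
    · have hval : colB T = 0 := by rw [hcolB]; dsimp only; rw [if_pos hbr]
      rw [hval, cval0]
      refine (card_filter_le _ _).trans ?_
      rw [G.card_neighborFinset_eq_degree, hdegB T hT]
    · by_cases hbr2 : f (Qf T) ≠ cb
      · have hval : colB T = cb := by
          rw [hcolB]; dsimp only; rw [if_neg hbr, if_pos hbr2]
        rw [hval, cvalne cb hcb0, Nat.le_zero]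
        apply hempty
        intro y hy hgy
        rcases (memNB T hT y).1 hy with rfl | rfl | rfl
        · rw [gv] at hgy
          exact hcvcb hgy
        · rw [gA T hT] at hgy
          have hv0 : colA T = 0 := by rw [hcolA]; dsimp only; rw [if_neg hbr]
          rw [hv0] at hgy
          exact hcb0 hgy.symm
        · have hQf : g (Qf T) = f (Qf T) := by
            refine gU _ (hqv T hT) ?_ ?_ ?_
            · rintro ⟨T', hT', h⟩
              exact (hQnTA T hT T' hT').1 h.symm
            · rintro ⟨T', hT', h⟩
              exact (hQnTA T hT T' hT').2 h.symm
            · rintro ⟨T', hT', hr', hq'⟩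
              have : T' = T := uniqQ T' hT' T hT hq'
              subst this
              exact hbr hr'.1
          rw [hQf] at hgy
          exact hbr2 hgy
      · have hval : colB T = 0 := by
          rw [hcolB]; dsimp only; rw [if_neg hbr, if_neg hbr2]
        rw [hval, cval0]
        refine (card_filter_le _ _).trans ?_
        rw [G.card_neighborFinset_eq_degree, hdegB T hT]
  by_cases hRu : ∃ T ∈ S, RecQ T ∧ Qf T = u
  · -- a recolored pendant
    obtain ⟨T, hT, hr, hq⟩ := hRu
    subst hq
    rw [gQ T hT hr]
    rw [cvalne _ (ncolne0 _ _), Nat.le_zero]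
    apply hempty
    intro y hy hgy
    by_cases hyB : y = B T
    · subst hyB
      rw [gB T hT] at hgy
      have hv0 : colB T = 0 := by rw [hcolB]; dsimp only; rw [if_pos hr.1]
      rw [hv0] at hgy
      exact ncolne0 _ _ hgy.symm
    · have hyv : y ≠ v := by
        intro h
        exact hQnv T hT (h ▸ hy).symm
      have hgyf : g y = f y := by
        refine gU y hyv ?_ ?_ ?_
        · rintro ⟨T', hT', h⟩
          subst h
          have hne : B T ≠ A T' := by
            intro h
            exact hyB h.symm
          exact common (B T) (A T') (Qf T) (hbv T hT) (hav T' hT') hne (hqv T hT)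
            (hbq T hT).symm hy
        · rintro ⟨T', hT', h⟩
          subst h
          have hne : B T ≠ B T' := by
            intro h
            exact hyB h.symm
          exact common (B T) (B T') (Qf T) (hbv T hT) (hbv T' hT') hne (hqv T hT)
            (hbq T hT).symm hy
        · rintro ⟨T', hT', hr', hq'⟩
          subst hq'
          by_cases hTT : T' = T
          · subst hTT
            exact hy.ne' rfl
          · have hQQ : Qf T ≠ Qf T' := by
              intro h
              exact hTT (uniqQ T hT T' hT' h).symm
            have hBB : B T ≠ B T' := by
              intro h
              exact hTT (uniq T' hT' T hT (B T') (Or.inr rfl) (Or.inr h.symm))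
            exact dist2 (B T) (B T') (Qf T) (Qf T') (hbv T hT) (hbv T' hT') hBB
              (hQnv T hT) (hQnv T' hT') (hqv T hT) (hqv T' hT') hQQ
              (hbq T hT).symm (hbq T' hT').symm hy
      rw [hgyf] at hgy
      exact hncol T hT hr y hy hyB hgy
  · -- an untouched vertex
    have hgu : g u = f u := gU u huv hAu hBu hRu
    rw [hgu]
    by_cases hu0 : f u = 0
    · rw [hu0, cval0]
      set Old := (G.neighborFinset u).filter (fun y => y ≠ v ∧ f y = 0) with hOldDef
      have hOld3 : Old.card ≤ 3 := by
        have := Hf u huv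
        rw [hu0] at this
        exact this
      set X := (G.neighborFinset u).filter (fun y => g y = 0 ∧ f y ≠ 0) with hXDef
      have hsub : (G.neighborFinset u).filter (fun x => g x = 0) ⊆ Old ∪ X := by
        intro y hy
        rw [mem_filter] at hy
        obtain ⟨hyN, hy0⟩ := hy
        have hyv : y ≠ v := by
          intro h
          subst h
          rw [gv] at hy0
          exact hcv0 hy0
        by_cases hf0 : f y = 0
        · exact mem_union_left _ (mem_filter.2 ⟨hyN, hyv, hf0⟩)
        · exact mem_union_right _ (mem_filter.2 ⟨hyN, hy0, hf0⟩)
      have hXmem : ∀ y ∈ X, ∃ T ∈ S, y = B T ∧ u = Qf T ∧ f (Pf T) ≠ cb ∧ f (B T) ≠ 0 := by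
        intro y hy
        rw [hXDef, mem_filter] at hy
        obtain ⟨hyN, hy0, hyf⟩ := hy
        have hadj : G.Adj u y := (mem_neighborFinset _ _ _).1 hyN
        have hyv : y ≠ v := by
          intro h
          subst h
          rw [gv] at hy0
          exact hcv0 hy0
        by_cases hA' : ∃ T ∈ S, A T = y
        · exfalso
          obtain ⟨T, hT, hEq⟩ := hA'
          subst hEq
          rw [gA T hT] at hy0
          have hPcb : f (Pf T) = cb := by
            by_contra hne
            rw [hcolA] at hy0
            dsimp only at hy0
            rw [if_pos hne] at hy0
            exact hcb0 hy0
          have huP : u = Pf T := by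
            rcases (memNA T hT u).1 hadj.symm with h | h | h
            · exact absurd h huv
            · exact absurd ⟨T, hT, h.symm⟩ hBu
            · exact h
          apply hcb0
          rw [← hPcb, ← huP]
          exact hu0
        by_cases hB' : ∃ T ∈ S, B T = y
        · obtain ⟨T, hT, hEq⟩ := hB'
          subst hEq
          have huQ : u = Qf T := by
            rcases (memNB T hT u).1 hadj.symm with h | h | h
            · exact absurd h huv
            · exact absurd ⟨T, hT, h.symm⟩ hAu
            · exact h
          rw [gB T hT] at hy0
          have hbr : f (Pf T) ≠ cb := by
            intro hP
            rw [hcolB] at hy0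
            dsimp only at hy0
            rw [if_neg (not_not.2 hP)] at hy0
            by_cases hQcb : f (Qf T) ≠ cb
            · rw [if_pos hQcb] at hy0
              exact hcb0 hy0
            · push_neg at hQcb
              apply hcb0
              rw [← hQcb, ← huQ]
              exact hu0
          exact ⟨T, hT, rfl, huQ, hbr, hyf⟩
        by_cases hR' : ∃ T ∈ S, RecQ T ∧ Qf T = y
        · exfalso
          obtain ⟨T, hT, hr', hq'⟩ := hR'
          rw [← hq', gQ T hT hr'] at hy0
          exact ncolne0 _ _ hy0
        · exfalso
          rw [gU y hyv hA' hB' hR'] at hy0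
          exact hyf hy0
      have hX1 : X.card ≤ 1 := by
        rw [card_le_one]
        intro y1 hy1 y2 hy2
        have ha1 : G.Adj u y1 := (mem_neighborFinset _ _ _).1 (mem_filter.1 hy1).1
        have ha2 : G.Adj u y2 := (mem_neighborFinset _ _ _).1 (mem_filter.1 hy2).1
        obtain ⟨T1, hT1, rfl, _, _, _⟩ := hXmem y1 hy1
        obtain ⟨T2, hT2, rfl, _, _, _⟩ := hXmem y2 hy2
        by_contra hne
        exact common (B T1) (B T2) u (hbv T1 hT1) (hbv T2 hT2) hne huv ha1 ha2
      have hXOld : X.Nonempty → Old.card ≤ 2 := by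
        rintro ⟨y, hy⟩
        obtain ⟨T, hT, hyB, huQ, hbr, hfB⟩ := hXmem y hy
        by_contra hgt
        push_neg at hgt
        have hsubz : Old ⊆ (G.neighborFinset u).filter (fun y => f y = 0) := by
          intro z hz
          rw [hOldDef, mem_filter] at hz
          exact mem_filter.2 ⟨hz.1, hz.2.2⟩
        have h3z : 3 ≤ zc (Qf T) := by
          rw [hzc]
          dsimp only
          rw [← huQ]
          calc 3 ≤ Old.card := hgt
            _ ≤ _ := card_le_card hsubz
        have hrec : RecQ T := by
          rw [hRecQ]
          exact ⟨hbr, by rw [← huQ]; exact hu0, hfB, h3z⟩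
        exact hRu ⟨T, hT, hrec, huQ.symm⟩
      have hmain := card_le_card hsub
      rcases X.eq_empty_or_nonempty with hXe | hXne
      · rw [hXe, union_empty] at hmain
        omega
      · have hcup := card_union_le Old X
        have := hXOld hXne
        omega
    · rw [cvalne _ hu0, Nat.le_zero]
      apply hempty
      intro y hy hgy
      by_cases hyv : y = v
      · subst hyv
        rw [gv] at hgy
        have huE : u ∈ E := by
          rw [hE]
          refine mem_sdiff.2 ⟨(mem_neighborFinset _ _ _).2 hy.symm, ?_⟩
          intro hmem
          obtain ⟨T, hT, h⟩ := (memTA u).1 hmem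
          rcases h with rfl | rfl
          · exact hAu ⟨T, hT, rfl⟩
          · exact hBu ⟨T, hT, rfl⟩
        exact hfE u huE hgy.symm
      by_cases hA' : ∃ T ∈ S, A T = y
      · obtain ⟨T, hT, hEq⟩ := hA'
        subst hEq
        rw [gA T hT] at hgy
        have hbr : f (Pf T) ≠ cb := by
          intro h
          rw [hcolA] at hgy
          dsimp only at hgy
          rw [if_neg (not_not.2 h)] at hgy
          exact hu0 hgy.symm
        have hfu : f u = cb := by
          rw [hcolA] at hgy
          dsimp only at hgy
          rw [if_pos hbr] at hgy
          exact hgy.symm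
        have huP : u = Pf T := by
          rcases (memNA T hT u).1 hy.symm with h | h | h
          · exact absurd h huv
          · exact absurd ⟨T, hT, h.symm⟩ hBu
          · exact h
        exact hbr (by rw [← huP]; exact hfu)
      by_cases hB' : ∃ T ∈ S, B T = y
      · obtain ⟨T, hT, hEq⟩ := hB'
        subst hEq
        rw [gB T hT] at hgy
        have h1 : ¬ f (Pf T) ≠ cb := by
          intro h
          rw [hcolB] at hgy
          dsimp only at hgy
          rw [if_pos h] at hgy
          exact hu0 hgy.symm
        have h2 : f (Qf T) ≠ cb := by
          intro h
          rw [hcolB] at hgy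
          dsimp only at hgy
          rw [if_neg h1, if_neg (not_not.2 h)] at hgy
          exact hu0 hgy.symm
        have hfu : f u = cb := by
          rw [hcolB] at hgy
          dsimp only at hgy
          rw [if_neg h1, if_pos h2] at hgy
          exact hgy.symm
        have huQ : u = Qf T := by
          rcases (memNB T hT u).1 hy.symm with h | h | h
          · exact absurd h huv
          · exact absurd ⟨T, hT, h.symm⟩ hAu
          · exact h
        exact h2 (by rw [← huQ]; exact hfu)
      by_cases hR' : ∃ T ∈ S, RecQ T ∧ Qf T = y
      · obtain ⟨T, hT, hr', hq'⟩ := hR'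
        subst hq'
        rw [gQ T hT hr'] at hgy
        exact hncol T hT hr' u hy.symm (fun h => hBu ⟨T, hT, h.symm⟩) hgy.symm
      · rw [gU y hyv hA' hB' hR'] at hgy
        have hHf := Hf u huv
        rw [cvalne _ hu0, Nat.le_zero, card_eq_zero, Finset.filter_eq_empty_iff] at hHf
        exact hHf ((mem_neighborFinset _ _ _).2 hy) ⟨hyv, hgy⟩
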